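/- If Ω is a bounded domain in ℂ (or ℂ^n) and M₁, M₂ are closed subspaces of the Bergman space L²_a(Ω) invariant under multiplication by the coordinate functions, and there exists a unitary V : M₁ → M₂ commuting with these multiplications, then M₁ = M₂. -/

import Mathlib

open MeasureTheory

noncomputable section

open Metric Set ComplexConjugate

/-- The Bergman space `L²_a(Ω)` of a domain `Ω ⊂ ℂ^n`: square-integrable (w.r.t. volume
measure on `Ω`) holomorphic functions, realized as a subspace of `L²(Ω)`. -/
def Bergman (n : ℕ) (Ω : Set (Fin n → ℂ)) :
    Submodule ℂ (Lp ℂ 2 ((volume : Measure (Fin n → ℂ)).restrict Ω)) where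
  carrier := {F | ∃ f : (Fin n → ℂ) → ℂ, DifferentiableOn ℂ f Ω ∧
    ⇑F =ᵐ[(volume : Measure (Fin n → ℂ)).restrict Ω] f}
  zero_mem' := ⟨fun _ => 0, differentiableOn_const 0, Lp.coeFn_zero ℂ 2 _⟩
  add_mem' := by
    rintro F G ⟨f, hf, hF⟩ ⟨g, hg, hG⟩
    exact ⟨f + g, hf.add hg, (Lp.coeFn_add F G).trans (hF.add hG)⟩
  smul_mem' := by
    rintro c F ⟨f, hf, hF⟩
    exact ⟨c • f, hf.const_smul c, (Lp.coeFn_smul c F).trans (hF.const_smul c)⟩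



/-- Identity theorem for holomorphic functions on a connected open subset of `ℂ^n`,
proved by slicing along complex lines. -/
theorem holo_eqOn_zero_of_ball {n : ℕ} {Ω : Set (Fin n → ℂ)} (hopen : IsOpen Ω)
    (hconn : IsPreconnected Ω) {u : (Fin n → ℂ) → ℂ} (hu : DifferentiableOn ℂ u Ω)
    {x₀ : Fin n → ℂ} (hx₀ : x₀ ∈ Ω) {r₀ : ℝ} (hr₀ : 0 < r₀) (hball : ball x₀ r₀ ⊆ Ω)
    (hz : ∀ x ∈ ball x₀ r₀, u x = 0) : ∀ x ∈ Ω, u x = 0 := by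
  classical
  set S : Set (Fin n → ℂ) := {x | x ∈ Ω ∧ ∀ᶠ y in nhds x, u y = 0} with hS
  have key : ∀ x ∈ S, ∀ r : ℝ, ball x r ⊆ Ω → ∀ y ∈ ball x r, u y = 0 := by
    intro x hx r hr y hy
    obtain ⟨hxΩ, hev⟩ := hx
    by_cases hxy : y = x
    · exact hxy ▸ hev.self_of_nhds
    set v : Fin n → ℂ := y - x with hv
    have hvne : v ≠ 0 := sub_ne_zero.mpr hxy
    have hvpos : (0:ℝ) < ‖v‖ := norm_pos_iff.mpr hvne
    set R : ℝ := r / ‖v‖ with hR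
    have hyx : ‖v‖ < r := by simpa [hv, dist_eq_norm] using hy
    have hR1 : 1 < R := (one_lt_div hvpos).mpr hyx
    set φ : ℂ → ℂ := fun t => u (x + t • v) with hφ
    have maps : ∀ t ∈ ball (0:ℂ) R, x + t • v ∈ ball x r := by
      intro t ht
      have h1 : ‖t‖ < R := by simpa [dist_eq_norm] using ht
      have : ‖t • v‖ < r := by
        rw [norm_smul]
        calc ‖t‖ * ‖v‖ < R * ‖v‖ := by gcongr
          _ = r := div_mul_cancel₀ _ (ne_of_gt hvpos)
      simpa [dist_eq_norm, add_sub_cancel_left] using this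
    have haff : Differentiable ℂ (fun t : ℂ => x + t • v) :=
      (differentiable_id.smul_const v).const_add x
    have hφd : DifferentiableOn ℂ φ (ball (0:ℂ) R) :=
      hu.comp haff.differentiableOn (fun t ht => hr (maps t ht))
    have hφa : AnalyticOnNhd ℂ φ (ball (0:ℂ) R) := hφd.analyticOnNhd isOpen_ball
    have htend : Filter.Tendsto (fun t : ℂ => x + t • v) (nhds 0) (nhds x) := by
      have := (haff.continuous.tendsto 0)
      simpa using this
    have hev0 : φ =ᶠ[nhds (0:ℂ)] (fun _ => (0:ℂ)) := htend.eventually hev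
    have h0R : (0:ℂ) ∈ ball (0:ℂ) R := mem_ball_self (lt_trans one_pos hR1)
    have := hφa.eqOn_of_preconnected_of_eventuallyEq (analyticOnNhd_const (v := (0:ℂ)))
      (convex_ball (0:ℂ) R).isPreconnected h0R hev0
    have h1R : (1:ℂ) ∈ ball (0:ℂ) R := by
      simp only [mem_ball, dist_zero_right, norm_one]
      exact hR1
    have := this h1R
    simpa [hφ, hv] using this
  have hSopen : IsOpen S := by
    rw [isOpen_iff_mem_nhds]
    rintro x ⟨hxΩ, hev⟩
    filter_upwards [hopen.mem_nhds hxΩ, eventually_eventually_nhds.mpr hev] with y h1 h2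
    exact ⟨h1, h2⟩
  have hclosure : ∀ x ∈ Ω, x ∈ closure S → x ∈ S := by
    intro x hxΩ hxc
    obtain ⟨r, hrpos, hballr⟩ := Metric.isOpen_iff.mp hopen x hxΩ
    obtain ⟨z, hzS, hdz⟩ := Metric.mem_closure_iff.mp hxc (r/2) (by positivity)
    have hb2 : ball z (r/2) ⊆ Ω := by
      intro w hw
      apply hballr
      have : dist w x ≤ dist w z + dist z x := dist_triangle w z x
      have hzx : dist z x < r/2 := by rwa [dist_comm] at hdz
      have hwz : dist w z < r/2 := hw
      simp only [mem_ball]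
      linarith
    have h0 : ∀ w ∈ ball z (r/2), u w = 0 := key z hzS (r/2) hb2
    have hxb : x ∈ ball z (r/2) := by simpa [mem_ball, dist_comm] using hdz
    exact ⟨hxΩ, by filter_upwards [isOpen_ball.mem_nhds hxb] with w hw using h0 w hw⟩
  have hx₀S : x₀ ∈ S :=
    ⟨hx₀, by filter_upwards [isOpen_ball.mem_nhds (mem_ball_self hr₀)] with w hw using hz w hw⟩
  have hcover : Ω ⊆ S ∪ (closure S)ᶜ := by
    intro x hx
    by_cases h : x ∈ closure S
    · exact Or.inl (hclosure x hx h)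
    · exact Or.inr h
  have hsub : Ω ⊆ S :=
    hconn.subset_left_of_subset_union hSopen isClosed_closure.isOpen_compl
      (disjoint_compl_right.mono_left subset_closure) hcover ⟨x₀, hx₀, hx₀S⟩
  exact fun x hx => (hsub hx).2.self_of_nhds

set_option maxHeartbeats 2000000 in
theorem bergman_le
    (n : ℕ) (Ω : Set (Fin n → ℂ))
    (hopen : IsOpen Ω) (hconn : IsConnected Ω) (hbdd : Bornology.IsBounded Ω)
    (M₁ M₂ : Submodule ℂ (Lp ℂ 2 ((volume : Measure (Fin n → ℂ)).restrict Ω)))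
    (hM₁a : ∀ F ∈ M₁, ∃ f : (Fin n → ℂ) → ℂ, DifferentiableOn ℂ f Ω ∧
      ⇑F =ᵐ[(volume : Measure (Fin n → ℂ)).restrict Ω] f)
    (hM₂a : ∀ F ∈ M₂, ∃ f : (Fin n → ℂ) → ℂ, DifferentiableOn ℂ f Ω ∧
      ⇑F =ᵐ[(volume : Measure (Fin n → ℂ)).restrict Ω] f)
    (hM₁inv : ∀ i : Fin n, ∀ F G : Lp ℂ 2 ((volume : Measure (Fin n → ℂ)).restrict Ω),
      F ∈ M₁ → (⇑G =ᵐ[(volume : Measure (Fin n → ℂ)).restrict Ω] fun x => x i * F x) → G ∈ M₁)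
    (hM₂inv : ∀ i : Fin n, ∀ F G : Lp ℂ 2 ((volume : Measure (Fin n → ℂ)).restrict Ω),
      F ∈ M₂ → (⇑G =ᵐ[(volume : Measure (Fin n → ℂ)).restrict Ω] fun x => x i * F x) → G ∈ M₂)
    (V : M₁ ≃ₗᵢ[ℂ] M₂)
    (hV : ∀ i : Fin n, ∀ F F' : M₁, ∀ G' : M₂,
      (⇑(F' : Lp ℂ 2 ((volume : Measure (Fin n → ℂ)).restrict Ω))
        =ᵐ[(volume : Measure (Fin n → ℂ)).restrict Ω]
        fun x => x i * (F : Lp ℂ 2 ((volume : Measure (Fin n → ℂ)).restrict Ω)) x) →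
      (⇑(G' : Lp ℂ 2 ((volume : Measure (Fin n → ℂ)).restrict Ω))
        =ᵐ[(volume : Measure (Fin n → ℂ)).restrict Ω]
        fun x => x i * ((V F : M₂) : Lp ℂ 2 ((volume : Measure (Fin n → ℂ)).restrict Ω)) x) →
      V F' = G') :
    M₁ ≤ M₂ := by
  classical
  intro F hF
  have hΩm : MeasurableSet Ω := hopen.measurableSet
  obtain ⟨R, hR⟩ := isBounded_iff_forall_norm_le.mp hbdd
  -- multiplication by a coordinate function preserves L²
  have hmul : ∀ (i : Fin n) (u : Lp ℂ 2 (volume.restrict Ω)), MemLp (fun x => x i * u x) 2 (volume.restrict Ω) := by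
    intro i u
    refine (Lp.memLp u).of_le_mul (c := R)
      ((continuous_apply i).aestronglyMeasurable.mul (Lp.aestronglyMeasurable u)) ?_
    filter_upwards [ae_restrict_mem hΩm] with x hx
    rw [norm_mul]
    exact mul_le_mul_of_nonneg_right ((norm_le_pi_norm x i).trans (hR x hx)) (norm_nonneg _)
  set G : M₂ := V ⟨F, hF⟩ with hGdef
  obtain ⟨f, hfd, hFf⟩ := hM₁a F hF
  obtain ⟨g, hgd, hGg⟩ := hM₂a (↑G) G.2
  set prodl : List (Fin n) → (Fin n → ℂ) → ℂ := fun l x => (l.map x).prod with hprodl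
  -- Lemma A : monomial multiples of f and g stay in M₁, M₂ and correspond under V
  have LemA : ∀ l : List (Fin n), ∃ (Fl Gl : Lp ℂ 2 (volume.restrict Ω)) (hFl : Fl ∈ M₁) (hGl : Gl ∈ M₂),
      (⇑Fl =ᵐ[volume.restrict Ω] fun x => prodl l x * f x) ∧ (⇑Gl =ᵐ[volume.restrict Ω] fun x => prodl l x * g x) ∧
      V ⟨Fl, hFl⟩ = ⟨Gl, hGl⟩ := by
    intro l
    induction l with
    | nil =>
      refine ⟨F, ↑G, hF, G.2, ?_, ?_, (Subtype.coe_eta G G.2).symm⟩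
      · simpa [hprodl] using hFf
      · simpa [hprodl] using hGg
    | cons i l ih =>
      obtain ⟨Fl, Gl, hFl, hGl, hFe, hGe, hVe⟩ := ih
      have m₁ := hmul i Fl
      have m₂ := hmul i Gl
      refine ⟨m₁.toLp _, m₂.toLp _, hM₁inv i Fl _ hFl m₁.coeFn_toLp,
        hM₂inv i Gl _ hGl m₂.coeFn_toLp, ?_, ?_, ?_⟩
      · refine m₁.coeFn_toLp.trans ?_
        filter_upwards [hFe] with x hx
        rw [hx]
        simp [hprodl, mul_assoc]
      · refine m₂.coeFn_toLp.trans ?_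
        filter_upwards [hGe] with x hx
        rw [hx]
        simp [hprodl, mul_assoc]
      · refine hV i ⟨Fl, hFl⟩ _ _ m₁.coeFn_toLp ?_
        rw [hVe]
        exact m₂.coeFn_toLp
  -- the "density" c = |f|² - |g|²  (as a complex function)
  set c : (Fin n → ℂ) → ℂ := fun x => f x * conj (f x) - g x * conj (g x) with hcdef
  -- Lemma B : integrals of monomials against c vanish
  have LemB : ∀ l₁ l₂ : List (Fin n),
      Integrable (fun x => (prodl l₁ x * conj (prodl l₂ x)) * c x) (volume.restrict Ω) ∧
      ∫ x, (prodl l₁ x * conj (prodl l₂ x)) * c x ∂(volume.restrict Ω) = 0 := by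
    intro l₁ l₂
    obtain ⟨F₁, G₁, hF₁, hG₁, he₁, hge₁, hv₁⟩ := LemA l₁
    obtain ⟨F₂, G₂, hF₂, hG₂, he₂, hge₂, hv₂⟩ := LemA l₂
    have hif : Integrable (fun x => conj (F₂ x) * F₁ x) (volume.restrict Ω) := by
      simpa [RCLike.inner_apply, mul_comm] using L2.integrable_inner (𝕜 := ℂ) F₂ F₁
    have hig : Integrable (fun x => conj (G₂ x) * G₁ x) (volume.restrict Ω) := by
      simpa [RCLike.inner_apply, mul_comm] using L2.integrable_inner (𝕜 := ℂ) G₂ G₁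
    have haef : (fun x => conj (F₂ x) * F₁ x) =ᵐ[volume.restrict Ω]
        fun x => (prodl l₁ x * conj (prodl l₂ x)) * (f x * conj (f x)) := by
      filter_upwards [he₁, he₂] with x h1 h2
      rw [h1, h2, map_mul]
      ring
    have haeg : (fun x => conj (G₂ x) * G₁ x) =ᵐ[volume.restrict Ω]
        fun x => (prodl l₁ x * conj (prodl l₂ x)) * (g x * conj (g x)) := by
      filter_upwards [hge₁, hge₂] with x h1 h2
      rw [h1, h2, map_mul]
      ring
    have hiff : Integrable (fun x => (prodl l₁ x * conj (prodl l₂ x)) * (f x * conj (f x)))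
        (volume.restrict Ω) := hif.congr haef
    have higg : Integrable (fun x => (prodl l₁ x * conj (prodl l₂ x)) * (g x * conj (g x)))
        (volume.restrict Ω) := hig.congr haeg
    have hinf : ∫ x, (prodl l₁ x * conj (prodl l₂ x)) * (f x * conj (f x)) ∂(volume.restrict Ω)
        = (inner ℂ F₂ F₁ : ℂ) := by
      rw [L2.inner_def]
      simp only [RCLike.inner_apply]
      refine (integral_congr_ae ?_).symm
      filter_upwards [haef] with x hx
      rw [← hx]
      ring
    have hing : ∫ x, (prodl l₁ x * conj (prodl l₂ x)) * (g x * conj (g x)) ∂(volume.restrict Ω)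
        = (inner ℂ G₂ G₁ : ℂ) := by
      rw [L2.inner_def]
      simp only [RCLike.inner_apply]
      refine (integral_congr_ae ?_).symm
      filter_upwards [haeg] with x hx
      rw [← hx]
      ring
    have hVinner : (inner ℂ F₂ F₁ : ℂ) = (inner ℂ G₂ G₁ : ℂ) := by
      calc (inner ℂ F₂ F₁ : ℂ) = inner ℂ ((⟨F₂, hF₂⟩ : M₁) : Lp ℂ 2 (volume.restrict Ω)) (↑(⟨F₁, hF₁⟩ : M₁)) := rfl
        _ = inner ℂ (⟨F₂, hF₂⟩ : M₁) (⟨F₁, hF₁⟩ : M₁) := (Submodule.coe_inner M₁ _ _).symm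
        _ = inner ℂ (V ⟨F₂, hF₂⟩) (V ⟨F₁, hF₁⟩) := (V.inner_map_map _ _).symm
        _ = inner ℂ ((⟨G₂, hG₂⟩ : M₂)) ((⟨G₁, hG₁⟩ : M₂)) := by rw [hv₁, hv₂]
        _ = inner ℂ G₂ G₁ := Submodule.coe_inner M₂ _ _
    constructor
    · refine (hiff.sub higg).congr (Filter.EventuallyEq.of_eq (funext fun x => ?_))
      simp only [hcdef, Pi.sub_apply]
      ring
    · have hsplit : (fun x => (prodl l₁ x * conj (prodl l₂ x)) * c x)
          = fun x => (prodl l₁ x * conj (prodl l₂ x)) * (f x * conj (f x))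
              - (prodl l₁ x * conj (prodl l₂ x)) * (g x * conj (g x)) := by
        funext x
        simp only [hcdef]
        ring
      rw [hsplit, integral_sub hiff higg, hinf, hing, hVinner, sub_self]
  -- the algebra generated by the coordinates and their conjugates
  set gensC : Set ((Fin n → ℂ) → ℂ) :=
    {w | ∃ i : Fin n, w = (fun x => x i) ∨ w = fun x => conj (x i)} with hgensC
  have LemC : ∀ w ∈ Algebra.adjoin ℂ gensC,
      Integrable (fun x => w x * c x) (volume.restrict Ω) ∧
      ∫ x, w x * c x ∂(volume.restrict Ω) = 0 := by
    intro w hw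
    have hw' : w ∈ Submodule.span ℂ ((Submonoid.closure gensC : Submonoid _) : Set _) := by
      rw [← Algebra.adjoin_eq_span]
      exact (Subalgebra.mem_toSubmodule _).mpr hw
    refine Submodule.span_induction ?_ ?_ ?_ ?_ hw'
    · intro m hm
      have hform : ∃ l₁ l₂ : List (Fin n),
          m = fun x => prodl l₁ x * conj (prodl l₂ x) := by
        refine Submonoid.closure_induction (motive := fun m _ => ∃ l₁ l₂ : List (Fin n),
          m = fun x => prodl l₁ x * conj (prodl l₂ x)) ?_ ?_ ?_ hm
        · rintro m ⟨i, h | h⟩ <;> subst h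
          · exact ⟨[i], [], by funext x; simp [hprodl]⟩
          · exact ⟨[], [i], by funext x; simp [hprodl]⟩
        · exact ⟨[], [], by funext x; simp [hprodl]⟩
        · rintro a b _ _ ⟨la1, la2, rfl⟩ ⟨lb1, lb2, rfl⟩
          refine ⟨la1 ++ lb1, la2 ++ lb2, ?_⟩
          funext x
          simp only [Pi.mul_apply, hprodl, List.map_append, List.prod_append, map_mul]
          ring
      obtain ⟨l₁, l₂, rfl⟩ := hform
      exact LemB l₁ l₂
    · constructor
      · simpa using (integrable_zero _ ℂ (volume.restrict Ω))
      · simp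
    · rintro a b _ _ ⟨ha1, ha2⟩ ⟨hb1, hb2⟩
      constructor
      · refine (ha1.add hb1).congr (Filter.EventuallyEq.of_eq (funext fun x => ?_))
        simp [add_mul]
      · have : (fun x => (a + b) x * c x) = fun x => a x * c x + b x * c x := by
          funext x; simp [add_mul]
        rw [this, integral_add ha1 hb1, ha2, hb2, add_zero]
    · rintro r a _ ⟨ha1, ha2⟩
      constructor
      · refine (ha1.smul r).congr (Filter.EventuallyEq.of_eq (funext fun x => ?_))
        simp [smul_eq_mul, mul_assoc]
      · have : (fun x => (r • a) x * c x) = fun x => r • (a x * c x) := by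
          funext x; simp [smul_eq_mul, mul_assoc]
        rw [this, integral_smul, ha2, smul_zero]
  have hcint : Integrable c (volume.restrict Ω) := by
    have := (LemC 1 (one_mem _)).1
    refine this.congr (Filter.EventuallyEq.of_eq (funext fun x => ?_))
    simp
  -- Stone–Weierstrass on K = closure Ω
  have hKc : IsCompact (closure Ω) := hbdd.isCompact_closure
  haveI : CompactSpace (closure Ω) := isCompact_iff_compactSpace.mp hKc
  set reF : Fin n → C(closure Ω, ℝ) := fun i =>
    ⟨fun x => ((x : Fin n → ℂ) i).re,
      Complex.continuous_re.comp ((continuous_apply i).comp continuous_subtype_val)⟩ with hreF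
  set imF : Fin n → C(closure Ω, ℝ) := fun i =>
    ⟨fun x => ((x : Fin n → ℂ) i).im,
      Complex.continuous_im.comp ((continuous_apply i).comp continuous_subtype_val)⟩ with himF
  set gensR : Set C(closure Ω, ℝ) := {φ | ∃ i : Fin n, φ = reF i ∨ φ = imF i} with hgensR
  have hsep : (Algebra.adjoin ℝ gensR).SeparatesPoints := by
    intro x y hxy
    have hxy' : (x : Fin n → ℂ) ≠ (y : Fin n → ℂ) := Subtype.coe_injective.ne hxy
    have hex : ∃ i : Fin n, (x : Fin n → ℂ) i ≠ (y : Fin n → ℂ) i := by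
      by_contra h
      push_neg at h
      exact hxy' (funext h)
    obtain ⟨i, hi⟩ := hex
    by_cases hre : ((x : Fin n → ℂ) i).re = ((y : Fin n → ℂ) i).re
    · have him : ((x : Fin n → ℂ) i).im ≠ ((y : Fin n → ℂ) i).im := by
        intro h
        exact hi (Complex.ext hre h)
      exact ⟨(imF i : C(closure Ω, ℝ)),
        Set.mem_image_of_mem _ (Algebra.subset_adjoin ⟨i, Or.inr rfl⟩), him⟩
    · exact ⟨(reF i : C(closure Ω, ℝ)),
        Set.mem_image_of_mem _ (Algebra.subset_adjoin ⟨i, Or.inl rfl⟩), hre⟩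
  -- real polynomial functions on K are represented by elements of the complex algebra
  have hrep : ∀ a ∈ Algebra.adjoin ℝ gensR, ∃ w ∈ Algebra.adjoin ℂ gensC,
      ∀ x : closure Ω, w (x : Fin n → ℂ) = ((a x : ℝ) : ℂ) := by
    intro a ha
    refine Algebra.adjoin_induction ?_ ?_ ?_ ?_ ha
    · rintro φ ⟨i, h | h⟩ <;> subst h
      · refine ⟨(2 : ℂ)⁻¹ • ((fun x => x i) + fun x => conj (x i)), ?_, ?_⟩
        · exact Subalgebra.smul_mem (Algebra.adjoin ℂ gensC)
            (Subalgebra.add_mem _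
              (Algebra.subset_adjoin (show _ ∈ gensC from ⟨i, Or.inl rfl⟩))
              (Algebra.subset_adjoin (show _ ∈ gensC from ⟨i, Or.inr rfl⟩))) _
        · intro x
          simp only [Pi.smul_apply, Pi.add_apply, smul_eq_mul, hreF, ContinuousMap.coe_mk]
          rw [Complex.add_conj]
          push_cast
          ring
      · refine ⟨(-Complex.I / 2) • ((fun x => x i) - fun x => conj (x i)), ?_, ?_⟩
        · exact Subalgebra.smul_mem (Algebra.adjoin ℂ gensC)
            (Subalgebra.sub_mem _
              (Algebra.subset_adjoin (show _ ∈ gensC from ⟨i, Or.inl rfl⟩))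
              (Algebra.subset_adjoin (show _ ∈ gensC from ⟨i, Or.inr rfl⟩))) _
        · intro x
          simp only [Pi.smul_apply, Pi.sub_apply, smul_eq_mul, himF, ContinuousMap.coe_mk]
          rw [Complex.sub_conj]
          have hI := Complex.I_sq
          push_cast
          linear_combination (-(((x : Fin n → ℂ) i).im : ℂ)) * hI
    · intro r
      refine ⟨(r : ℂ) • (1 : (Fin n → ℂ) → ℂ), Subalgebra.smul_mem _ (one_mem _) _, ?_⟩
      intro x
      simp [Algebra.algebraMap_eq_smul_one]
    · rintro a b _ _ ⟨w₁, hw₁, he₁⟩ ⟨w₂, hw₂, he₂⟩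
      refine ⟨w₁ + w₂, Subalgebra.add_mem _ hw₁ hw₂, fun x => ?_⟩
      simp only [Pi.add_apply, he₁ x, he₂ x, ContinuousMap.add_apply]
      push_cast
      ring
    · rintro a b _ _ ⟨w₁, hw₁, he₁⟩ ⟨w₂, hw₂, he₂⟩
      refine ⟨w₁ * w₂, Subalgebra.mul_mem _ hw₁ hw₂, fun x => ?_⟩
      simp only [Pi.mul_apply, he₁ x, he₂ x, ContinuousMap.mul_apply]
      push_cast
      ring
  -- integrals against continuous bounded real functions vanish
  have key : ∀ φ : (Fin n → ℂ) → ℝ, Continuous φ → (∃ Cb, ∀ x, ‖φ x‖ ≤ Cb) →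
      ∫ x, φ x • c x ∂(volume.restrict Ω) = 0 := by
    intro φ hφc ⟨Cb, hCb⟩
    have hφint : Integrable (fun x => (φ x : ℂ) * c x) (volume.restrict Ω) := by
      refine hcint.bdd_mul (c := Cb) ((Complex.continuous_ofReal.comp hφc).aestronglyMeasurable)
        (Filter.Eventually.of_forall fun x => ?_)
      simpa using hCb x
    have hbound : ∀ ε > 0, ‖∫ x, (φ x : ℂ) * c x ∂(volume.restrict Ω)‖
        ≤ ε * ∫ x, ‖c x‖ ∂(volume.restrict Ω) := by
      intro ε hε
      obtain ⟨a, ha⟩ := ContinuousMap.exists_mem_subalgebra_near_continuous_of_separatesPoints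
        (Algebra.adjoin ℝ gensR) hsep (fun x : closure Ω => φ (x : Fin n → ℂ))
        (hφc.comp continuous_subtype_val) ε hε
      obtain ⟨w, hwA, hweq⟩ := hrep (a : C(closure Ω, ℝ)) a.2
      have hw := LemC w hwA
      have hdint : Integrable (fun x => ((φ x : ℂ) - w x) * c x) (volume.restrict Ω) := by
        refine (hφint.sub hw.1).congr (Filter.EventuallyEq.of_eq (funext fun x => ?_))
        simp only [hcdef, Pi.sub_apply]
        ring
      have hJ : ∫ x, (φ x : ℂ) * c x ∂(volume.restrict Ω)
          = ∫ x, ((φ x : ℂ) - w x) * c x ∂(volume.restrict Ω) := by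
        have hsplit : (fun x => (φ x : ℂ) * c x)
            = fun x => ((φ x : ℂ) - w x) * c x + w x * c x := by
          funext x; ring
        rw [hsplit, integral_add hdint hw.1, hw.2, add_zero]
      rw [hJ]
      calc ‖∫ x, ((φ x : ℂ) - w x) * c x ∂(volume.restrict Ω)‖
          ≤ ∫ x, ‖((φ x : ℂ) - w x) * c x‖ ∂(volume.restrict Ω) :=
            norm_integral_le_integral_norm _
        _ ≤ ∫ x, ε * ‖c x‖ ∂(volume.restrict Ω) := by
            refine integral_mono_ae hdint.norm (hcint.norm.const_mul ε) ?_
            filter_upwards [ae_restrict_mem hΩm] with x hx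
            have hxK : x ∈ closure Ω := subset_closure hx
            rw [norm_mul]
            refine mul_le_mul_of_nonneg_right ?_ (norm_nonneg _)
            have h1 : w x = (((a : C(closure Ω, ℝ)) ⟨x, hxK⟩ : ℝ) : ℂ) := hweq ⟨x, hxK⟩
            rw [h1]
            have : ((φ x : ℂ) - (((a : C(closure Ω, ℝ)) ⟨x, hxK⟩ : ℝ) : ℂ)) = ((φ x - (a : C(closure Ω, ℝ)) ⟨x, hxK⟩ : ℝ) : ℂ) := by
              push_cast; ring
            rw [this]
            have h2 := ha ⟨x, hxK⟩
            rw [norm_sub_rev] at h2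
            calc ‖((φ x - (a : C(closure Ω, ℝ)) ⟨x, hxK⟩ : ℝ) : ℂ)‖ = ‖φ x - (a : C(closure Ω, ℝ)) ⟨x, hxK⟩‖ := by
                  rw [Complex.norm_real]
              _ ≤ ε := le_of_lt h2
        _ = ε * ∫ x, ‖c x‖ ∂(volume.restrict Ω) := by
            simp_rw [← smul_eq_mul]
            rw [integral_smul]
    have hnn : (0:ℝ) ≤ ∫ x, ‖c x‖ ∂(volume.restrict Ω) :=
      integral_nonneg fun x => norm_nonneg _
    have hz : ∫ x, (φ x : ℂ) * c x ∂(volume.restrict Ω) = 0 := by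
      set J := ∫ x, (φ x : ℂ) * c x ∂(volume.restrict Ω) with hJdef
      set C := ∫ x, ‖c x‖ ∂(volume.restrict Ω) with hCdef
      have : ‖J‖ ≤ 0 := by
        by_contra hlt
        push_neg at hlt
        have hC1 : (0:ℝ) < 2 * (C + 1) := by linarith
        have h1 := hbound (‖J‖ / (2 * (C + 1))) (div_pos hlt hC1)
        have h2 : ‖J‖ / (2 * (C + 1)) * C ≤ ‖J‖ / (2 * (C + 1)) * (C + 1) :=
          mul_le_mul_of_nonneg_left (by linarith) (le_of_lt (div_pos hlt hC1))
        have h3 : ‖J‖ / (2 * (C + 1)) * (C + 1) = ‖J‖ / 2 := by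
          have hne : (2 * (C + 1)) ≠ 0 := ne_of_gt hC1
          field_simp
        linarith
      simpa using le_antisymm this (norm_nonneg J)
    rw [← hz]
    refine integral_congr_ae (Filter.EventuallyEq.of_eq (funext fun x => ?_))
    rw [Complex.real_smul]
  -- hence c vanishes a.e. on Ω
  have hc0 : ∀ᵐ x ∂(volume.restrict Ω), c x = 0 := by
    refine ae_eq_zero_of_integral_contDiff_smul_eq_zero hcint.locallyIntegrable ?_
    intro ψ hψ hψs
    exact key ψ hψ.continuous (hψs.exists_bound_of_continuous hψ.continuous)
  -- c is continuous on Ω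
  have hconjf : ContinuousOn (fun x => conj (f x)) Ω := by
    have : Continuous (fun z : ℂ => conj z) := Complex.continuous_conj
    exact this.comp_continuousOn hfd.continuousOn
  have hconjg : ContinuousOn (fun x => conj (g x)) Ω := by
    have : Continuous (fun z : ℂ => conj z) := Complex.continuous_conj
    exact this.comp_continuousOn hgd.continuousOn
  have hccont : ContinuousOn c Ω :=
    (hfd.continuousOn.mul hconjf).sub (hgd.continuousOn.mul hconjg)
  -- c vanishes everywhere on Ω
  have hcz : ∀ x ∈ Ω, c x = 0 := by
    set U : Set (Fin n → ℂ) := {x | x ∈ Ω ∧ c x ≠ 0} with hUdef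
    have hUopen : IsOpen U := by
      rw [isOpen_iff_mem_nhds]
      rintro x ⟨hxΩ, hxc⟩
      have hca : ContinuousAt c x := hccont.continuousAt (hopen.mem_nhds hxΩ)
      filter_upwards [hca.eventually_ne hxc, hopen.mem_nhds hxΩ] with y h1 h2
      exact ⟨h2, h1⟩
    have hU0 : volume U = 0 := by
      have h0' : volume {x | ¬(x ∈ Ω → c x = 0)} = 0 := by
        have := (ae_restrict_iff' hΩm).mp hc0
        exact this
      refine measure_mono_null ?_ h0'
      rintro x ⟨hxΩ, hxc⟩
      simp only [Set.mem_setOf_eq]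
      intro h
      exact hxc (h hxΩ)
    have hUempty : U = ∅ := ((hUopen.measure_eq_zero_iff volume).mp hU0)
    intro x hx
    by_contra hne
    have : x ∈ U := ⟨hx, hne⟩
    rw [hUempty] at this
    exact this
  -- hence |f| = |g| on Ω
  have habs : ∀ x ∈ Ω, ‖f x‖ = ‖g x‖ := by
    intro x hx
    have h := hcz x hx
    have h' : f x * conj (f x) = g x * conj (g x) := sub_eq_zero.mp h
    rw [Complex.mul_conj, Complex.mul_conj] at h'
    have h'' := Complex.ofReal_inj.mp h'
    rw [Complex.normSq_eq_norm_sq, Complex.normSq_eq_norm_sq] at h''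
    exact (pow_left_inj₀ (norm_nonneg _) (norm_nonneg _) two_ne_zero).mp h''
  by_cases hg0 : ∀ x ∈ Ω, g x = 0
  · -- V F vanishes, hence F = 0 ∈ M₂
    have hf0 : ∀ x ∈ Ω, f x = 0 := by
      intro x hx
      have := habs x hx
      rw [hg0 x hx] at this
      simpa using this
    have hFzero : F = 0 := by
      refine Lp.ext ((hFf.trans ?_).trans (Lp.coeFn_zero ℂ 2 (volume.restrict Ω)).symm)
      filter_upwards [ae_restrict_mem hΩm] with x hx
      exact hf0 x hx
    rw [hFzero]
    exact M₂.zero_mem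
  · push_neg at hg0
    obtain ⟨x₀, hx₀, hgx₀⟩ := hg0
    have hN : {x | g x ≠ 0} ∩ Ω ∈ nhds x₀ :=
      Filter.inter_mem ((hgd.continuousOn.continuousAt
        (hopen.mem_nhds hx₀)).eventually_ne hgx₀) (hopen.mem_nhds hx₀)
    obtain ⟨r, hr, hballN⟩ := Metric.mem_nhds_iff.mp hN
    have hgne : ∀ x ∈ ball x₀ r, g x ≠ 0 := fun x hx => (hballN hx).1
    have hballΩ : ball x₀ r ⊆ Ω := fun x hx => (hballN hx).2
    set q : (Fin n → ℂ) → ℂ := fun x => f x * (g x)⁻¹ with hqdef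
    have hqd : DifferentiableOn ℂ q (ball x₀ r) :=
      (hfd.mono hballΩ).mul ((hgd.mono hballΩ).inv hgne)
    have hqnorm : ∀ x ∈ ball x₀ r, ‖q x‖ = 1 := by
      intro x hx
      rw [hqdef]
      simp only [norm_mul, norm_inv]
      rw [habs x (hballΩ hx)]
      exact mul_inv_cancel₀ (norm_ne_zero_iff.mpr (hgne x hx))
    have hmax : IsMaxOn (norm ∘ q) (ball x₀ r) x₀ := by
      intro x hx
      show ‖q x‖ ≤ ‖q x₀‖
      rw [hqnorm x hx, hqnorm x₀ (mem_ball_self hr)]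
    have hqc := Complex.eqOn_of_isPreconnected_of_isMaxOn_norm
      (convex_ball x₀ r).isPreconnected isOpen_ball hqd (mem_ball_self hr) hmax
    set lam : ℂ := q x₀ with hlam
    have hfg : ∀ x ∈ ball x₀ r, f x - lam * g x = 0 := by
      intro x hx
      rw [sub_eq_zero]
      have h1 : q x = lam := hqc hx
      rw [← h1, hqdef]
      rw [mul_assoc, inv_mul_cancel₀ (hgne x hx), mul_one]
    have hud : DifferentiableOn ℂ (fun x => f x - lam * g x) Ω :=
      hfd.sub (hgd.const_mul lam)
    have huz := holo_eqOn_zero_of_ball hopen hconn.isPreconnected hud hx₀ hr hballΩ hfg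
    have hFeq : F = lam • (↑G : Lp ℂ 2 (volume.restrict Ω)) := by
      refine Lp.ext ?_
      have h4 := Lp.coeFn_smul lam (↑G : Lp ℂ 2 (volume.restrict Ω))
      filter_upwards [hFf, hGg, ae_restrict_mem hΩm, h4] with x h1 h2 h3 h5
      rw [h1, h5]
      simp only [Pi.smul_apply, smul_eq_mul, h2]
      exact sub_eq_zero.mp (huz x h3)
    rw [hFeq]
    exact M₂.smul_mem lam G.2

/-- if `Ω` is a bounded domain in `ℂ^n` and `M₁`, `M₂` are closed subspaces of
the Bergman space `L²_a(Ω)` invariant under multiplication by the coordinate functions, and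
there is a unitary `V : M₁ → M₂` commuting with these multiplications, then `M₁ = M₂`. -/
theorem isometrically_isomorphic_submodules_of_bergman_are_equal
    (n : ℕ) (Ω : Set (Fin n → ℂ))
    (hopen : IsOpen Ω) (hconn : IsConnected Ω) (hbdd : Bornology.IsBounded Ω)
    (M₁ M₂ : Submodule ℂ (Lp ℂ 2 ((volume : Measure (Fin n → ℂ)).restrict Ω)))
    (hM₁closed : IsClosed (M₁ : Set (Lp ℂ 2 ((volume : Measure (Fin n → ℂ)).restrict Ω))))
    (hM₂closed : IsClosed (M₂ : Set (Lp ℂ 2 ((volume : Measure (Fin n → ℂ)).restrict Ω))))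
    (hM₁a : M₁ ≤ Bergman n Ω) (hM₂a : M₂ ≤ Bergman n Ω)
    (hM₁inv : ∀ i : Fin n, ∀ F G : Lp ℂ 2 ((volume : Measure (Fin n → ℂ)).restrict Ω),
      F ∈ M₁ → (⇑G =ᵐ[(volume : Measure (Fin n → ℂ)).restrict Ω] fun x => x i * F x) → G ∈ M₁)
    (hM₂inv : ∀ i : Fin n, ∀ F G : Lp ℂ 2 ((volume : Measure (Fin n → ℂ)).restrict Ω),
      F ∈ M₂ → (⇑G =ᵐ[(volume : Measure (Fin n → ℂ)).restrict Ω] fun x => x i * F x) → G ∈ M₂)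
    (V : M₁ ≃ₗᵢ[ℂ] M₂)
    (hV : ∀ i : Fin n, ∀ F F' : M₁, ∀ G' : M₂,
      (⇑(F' : Lp ℂ 2 ((volume : Measure (Fin n → ℂ)).restrict Ω))
        =ᵐ[(volume : Measure (Fin n → ℂ)).restrict Ω]
        fun x => x i * (F : Lp ℂ 2 ((volume : Measure (Fin n → ℂ)).restrict Ω)) x) →
      (⇑(G' : Lp ℂ 2 ((volume : Measure (Fin n → ℂ)).restrict Ω))
        =ᵐ[(volume : Measure (Fin n → ℂ)).restrict Ω]
        fun x => x i * ((V F : M₂) : Lp ℂ 2 ((volume : Measure (Fin n → ℂ)).restrict Ω)) x) →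
      V F' = G') :
    M₁ = M₂ := by
  refine le_antisymm
    (bergman_le n Ω hopen hconn hbdd M₁ M₂ (fun F hF => hM₁a hF) (fun F hF => hM₂a hF)
      hM₁inv hM₂inv V hV) ?_
  refine bergman_le n Ω hopen hconn hbdd M₂ M₁ (fun F hF => hM₂a hF) (fun F hF => hM₁a hF)
    hM₂inv hM₁inv V.symm ?_
  intro i G G' F' h₁ h₂
  have h₂' : ⇑((G' : Lp ℂ 2 ((volume : Measure (Fin n → ℂ)).restrict Ω)))
      =ᵐ[(volume : Measure (Fin n → ℂ)).restrict Ω]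
      fun x => x i * ((V (V.symm G) : M₂) : Lp ℂ 2 ((volume : Measure (Fin n → ℂ)).restrict Ω)) x := by
    rw [V.apply_symm_apply]
    exact h₁
  have h3 := hV i (V.symm G) F' G' h₂ h₂'
  rw [← h3, V.symm_apply_apply]
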